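/- Let H be a complex Hilbert space and A a von Neumann algebra on H whose commutant C = A' is abelian. Fix ξ ∈ H and let E be the orthogonal projection onto the closure of {Bξ : B ∈ C}. Let X be a bounded operator on H commuting with every element of C. Then for every A ∈ A and every B ∈ C one has A E (X*B) ξ = B (A E X ξ); that is, the map ε(X) defined on {Aξ : A ∈ A} by ε(X)Aξ = A E X ξ satisfies the modularity property ε(XB) = B ε(X) on this domain. Moreover E(1)ξ-unitality holds: A E ξ = A ξ for every A ∈ A. -/

import Mathlib

/-- The orthogonal projection of `H` onto the closure of the subspace spanned by `S`,
viewed as a bounded operator on `H`. -/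
noncomputable def projCl {H : Type*} [NormedAddCommGroup H] [InnerProductSpace ℂ H]
    [CompleteSpace H] (S : Set H) : H →L[ℂ] H :=
  haveI : CompleteSpace ((Submodule.span ℂ S).topologicalClosure) :=
    ((Submodule.span ℂ S).isClosed_topologicalClosure).completeSpace_coe
  ((Submodule.span ℂ S).topologicalClosure).subtypeL.comp
    (Submodule.orthogonalProjection ((Submodule.span ℂ S).topologicalClosure))

/-- The orthogonal projection `E` onto the closure of `{Bξ : B ∈ A'}`, where `A'` is the
commutant of the von Neumann algebra `A`. -/
noncomputable def cyclicProj {H : Type*} [NormedAddCommGroup H] [InnerProductSpace ℂ H]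
    [CompleteSpace H] (A : VonNeumannAlgebra H) (ξ : H) : H →L[ℂ] H :=
  projCl ((fun B : H →L[ℂ] H => B ξ) '' (A.commutant : Set (H →L[ℂ] H)))

section aux

variable {H : Type*} [NormedAddCommGroup H] [InnerProductSpace ℂ H] [CompleteSpace H]
  (A : VonNeumannAlgebra H) (ξ : H)

open scoped InnerProductSpace

/-- The closed subspace `cl(span(A'ξ))`. -/
noncomputable def cyclicSub : Submodule ℂ H := (Submodule.span ℂ
    ((fun B : H →L[ℂ] H => B ξ) '' (A.commutant : Set (H →L[ℂ] H)))).topologicalClosure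

local notation "K" => cyclicSub A ξ

lemma cyclicSubspace_invariant {B : H →L[ℂ] H} (hB : B ∈ A.commutant) {x : H}
    (hx : x ∈ K) : B x ∈ K := by
  have hspan : ∀ y ∈ (Submodule.span ℂ
      ((fun B : H →L[ℂ] H => B ξ) '' (A.commutant : Set (H →L[ℂ] H))) : Set H),
      B y ∈ (Submodule.span ℂ
      ((fun B : H →L[ℂ] H => B ξ) '' (A.commutant : Set (H →L[ℂ] H))) : Set H) := by
    intro y hy
    induction hy using Submodule.span_induction with
    | mem z hz =>
      obtain ⟨B', hB', rfl⟩ := hz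
      exact Submodule.subset_span ⟨B * B', mul_mem hB hB', rfl⟩
    | zero => simpa using Submodule.zero_mem _
    | add y z _ _ hy hz => simpa [map_add] using Submodule.add_mem _ hy hz
    | smul c y _ hy => simpa [map_smul] using Submodule.smul_mem _ c hy
  have : x ∈ closure ((Submodule.span ℂ
      ((fun B : H →L[ℂ] H => B ξ) '' (A.commutant : Set (H →L[ℂ] H)))) : Set H) := hx
  exact map_mem_closure B.continuous this hspan

lemma cyclicProj_comm {B : H →L[ℂ] H} (hB : B ∈ A.commutant) (x : H) :
    B (cyclicProj A ξ x) = cyclicProj A ξ (B x) := by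
  haveI : CompleteSpace K := (Submodule.isClosed_topologicalClosure _).completeSpace_coe
  have hBstar : (star B) ∈ A.commutant := star_mem hB
  have hmem : B ((Submodule.orthogonalProjection K x : H)) ∈ K :=
    cyclicSubspace_invariant A ξ hB (Submodule.orthogonalProjection K x).2
  have horth : B x - B ((Submodule.orthogonalProjection K x : H)) ∈ Kᗮ := by
    rw [← map_sub]
    intro k hk
    have h1 : x - (Submodule.orthogonalProjection K x : H) ∈ Kᗮ :=
      Submodule.sub_starProjection_mem_orthogonal x
    have h2 : (star B) k ∈ K := cyclicSubspace_invariant A ξ hBstar hk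
    calc ⟪k, B (x - (Submodule.orthogonalProjection K x : H))⟫_ℂ
        = ⟪(star B) k, x - (Submodule.orthogonalProjection K x : H)⟫_ℂ := by
          rw [ContinuousLinearMap.star_eq_adjoint, ContinuousLinearMap.adjoint_inner_left]
      _ = 0 := h1 _ h2
  have key : (Submodule.orthogonalProjection K (B x) : H) = B ((Submodule.orthogonalProjection K x : H)) := by
    have := Submodule.eq_starProjection_of_mem_orthogonal' (u := B x)
      (v := B ((Submodule.orthogonalProjection K x : H))) (z := B x - B ((Submodule.orthogonalProjection K x : H)))
      hmem horth (by abel)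
    exact this
  simp only [cyclicProj, projCl, ContinuousLinearMap.coe_comp', Function.comp_apply,
    Submodule.coe_subtypeL', Submodule.coe_subtype]
  exact key.symm

lemma cyclicProj_xi : cyclicProj A ξ ξ = ξ := by
  haveI : CompleteSpace K := (Submodule.isClosed_topologicalClosure _).completeSpace_coe
  have hξ : ξ ∈ K :=
    Submodule.le_topologicalClosure _ (Submodule.subset_span ⟨1, one_mem _, by simp⟩)
  simp only [cyclicProj, projCl, ContinuousLinearMap.coe_comp', Function.comp_apply,
    Submodule.coe_subtypeL', Submodule.coe_subtype]
  exact Submodule.starProjection_eq_self_iff.2 hξ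

end aux

/-- (Modularity and unitality of the conditional expectation (3.5) in Theorem 3.) If the
commutant `C = A'` is abelian, `E` the orthogonal projection onto the closure of
`{Bξ : B ∈ C}`, and `X` a bounded operator commuting with every element of `C`, then for
`A ∈ A` and `B ∈ C` one has `A E (X B) ξ = B (A E X ξ)` (modularity of
`ε(X) : Aξ ↦ A E X ξ`), and `A E ξ = A ξ` (unitality). -/
theorem cyclicProj_conditional_expectation_modular_unital
    {H : Type*} [NormedAddCommGroup H] [InnerProductSpace ℂ H] [CompleteSpace H]
    (A : VonNeumannAlgebra H)
    (habelian : ∀ b₁ ∈ A.commutant, ∀ b₂ ∈ A.commutant, b₁ * b₂ = b₂ * b₁)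
    (ξ : H) (X : H →L[ℂ] H)
    (hX : ∀ B ∈ A.commutant, X * B = B * X) :
    (∀ a ∈ A, ∀ b ∈ A.commutant,
        a (cyclicProj A ξ ((X * b) ξ)) = b (a (cyclicProj A ξ (X ξ)))) ∧
      ∀ a ∈ A, a (cyclicProj A ξ ξ) = a ξ := by
  constructor
  · intro a ha b hb
    have h1 : (X * b) ξ = b (X ξ) := by
      rw [hX b hb]; rfl
    have h2 : cyclicProj A ξ (b (X ξ)) = b (cyclicProj A ξ (X ξ)) :=
      (cyclicProj_comm A ξ hb (X ξ)).symm
    rw [h1, h2]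
    have hab : a * b = b * a := VonNeumannAlgebra.mem_commutant_iff.1 hb a ha
    calc a (b (cyclicProj A ξ (X ξ))) = (a * b) (cyclicProj A ξ (X ξ)) := rfl
      _ = (b * a) (cyclicProj A ξ (X ξ)) := by rw [hab]
      _ = b (a (cyclicProj A ξ (X ξ))) := rfl
  · intro a _
    rw [cyclicProj_xi]
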